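/- Let Σ = {a, b, c} (three distinct letters), let h : Σ → Σ be the map with h(a) = a, h(b) = b, h(c) = b, let K := {zip(u, h(u)) : u ∈ Σ*} ⊆ (Σ × Σ)* (where h is applied letterwise), and let L := {w c : w ∈ {a, b}*}. Then K and L are weakly acyclic languages, but Post(K, L) = {w b : w ∈ {a, b}*}, which is not a weakly acyclic language. -/

import Mathlib

/-- A DFA is *weakly acyclic* if whenever a nonempty word `w` loops on a state `q`,
every letter occurring in `w` self-loops on `q`. -/
def DFA.WeaklyAcyclic {α : Type*} {σ : Type*} (A : DFA α σ) : Prop :=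
  ∀ (q : σ) (w : List α), w ≠ [] → A.evalFrom q w = q → ∀ a ∈ w, A.step q a = q

/-- A language is weakly acyclic if it is accepted by some weakly acyclic DFA
with finitely many states. -/
def Language.IsWeaklyAcyclic {α : Type*} (L : Language α) : Prop :=
  ∃ (σ : Type) (_ : Fintype σ) (A : DFA α σ), A.WeaklyAcyclic ∧ A.accepts = L

/-- The residual of the language `L` with respect to the word `u`. -/
def Language.residual {α : Type*} (L : Language α) (u : List α) : Language α :=
  {v | u ++ v ∈ L}

/-- `Post K L` is the set of words `v` such that `zip(u, v) ∈ K` and `u ∈ L`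
for some word `u` of the same length as `v`. -/
def Post {α : Type*} (K : Language (α × α)) (L : Language α) : Language α :=
  {v | ∃ u : List α, u.length = v.length ∧ u.zip v ∈ K ∧ u ∈ L}

namespace PostWAAux

variable {α : Type}

/-! ### The DFA for K -/

open Classical in
/-- DFA for `K = {zip(u, h(u))}`: state `true` while all letters `(x,y)` satisfy
`y = h x`; sink `false` otherwise. -/
noncomputable def dfaK (h : α → α) : DFA (α × α) Bool where
  step q p := if p.2 = h p.1 then q else false
  start := true
  accept := {true}

lemma dfaK_step_false (h : α → α) (p : α × α) : (dfaK h).step false p = false := by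
  simp [dfaK]

lemma dfaK_false (h : α → α) : ∀ w : List (α × α), (dfaK h).evalFrom false w = false
  | [] => rfl
  | p :: t => by
    show (dfaK h).evalFrom ((dfaK h).step false p) t = false
    rw [dfaK_step_false]; exact dfaK_false h t

lemma dfaK_true_iff (h : α → α) :
    ∀ w : List (α × α), (dfaK h).evalFrom true w = true ↔ ∀ p ∈ w, p.2 = h p.1
  | [] => by simp [DFA.evalFrom]
  | p :: t => by
    by_cases hp : p.2 = h p.1
    · have hstep : (dfaK h).step true p = true := by simp [dfaK, hp]
      show (dfaK h).evalFrom ((dfaK h).step true p) t = true ↔ _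
      rw [hstep, dfaK_true_iff h t]
      simp [hp]
    · have hstep : (dfaK h).step true p = false := by simp [dfaK, hp]
      show (dfaK h).evalFrom ((dfaK h).step true p) t = true ↔ _
      rw [hstep, dfaK_false]
      simp only [Bool.false_eq_true, false_iff]
      intro hall
      exact hp (hall p (List.mem_cons_self))

lemma mem_K_iff (h : α → α) (w : List (α × α)) :
    (∃ u : List α, w = u.zip (u.map h)) ↔ ∀ p ∈ w, p.2 = h p.1 := by
  constructor
  · rintro ⟨u, rfl⟩
    induction u with
    | nil => simp
    | cons x t ih => simpa using ih
  · intro hall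
    induction w with
    | nil => exact ⟨[], rfl⟩
    | cons p t ih =>
      obtain ⟨u, hu⟩ := ih (fun q hq => hall q (List.mem_cons_of_mem _ hq))
      refine ⟨p.1 :: u, ?_⟩
      have hp : p.2 = h p.1 := hall p (List.mem_cons_self)
      simp only [List.map_cons, List.zip_cons_cons]
      rw [← hu]
      exact congrArg (· :: t) (Prod.ext rfl hp)

lemma dfaK_weaklyAcyclic (h : α → α) : (dfaK h).WeaklyAcyclic := by
  intro q w hw hloop p hp
  cases q with
  | false => exact dfaK_step_false h p
  | true =>
    have := (dfaK_true_iff h w).1 hloop p hp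
    simp [dfaK, this]

lemma dfaK_accepts (h : α → α) :
    (dfaK h).accepts = {w : List (α × α) | ∃ u : List α, w = u.zip (u.map h)} := by
  ext w
  rw [DFA.mem_accepts]
  show (dfaK h).evalFrom true w ∈ ({true} : Set Bool) ↔ _
  rw [Set.mem_singleton_iff, dfaK_true_iff h w]
  exact (mem_K_iff h w).symm

/-! ### The DFA for L -/

inductive St3 : Type
  | s0 | s1 | s2
  deriving DecidableEq

instance : Fintype St3 := ⟨{.s0, .s1, .s2}, fun x => by cases x <;> simp⟩

open Classical in
/-- DFA for `L = {a,b}*·c`: `s0` reads letters `≠ c`, moves to accepting `s1` on `c`,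
and any further letter goes to the sink `s2`. -/
noncomputable def dfaL (c : α) : DFA α St3 where
  step q x := match q with
    | .s0 => if x = c then .s1 else .s0
    | .s1 => .s2
    | .s2 => .s2
  start := .s0
  accept := {.s1}

lemma dfaL_s2 (c : α) : ∀ w : List α, (dfaL c).evalFrom St3.s2 w = St3.s2
  | [] => rfl
  | x :: t => by
    show (dfaL c).evalFrom ((dfaL c).step St3.s2 x) t = St3.s2
    exact dfaL_s2 c t

lemma dfaL_s1 (c : α) (w : List α) :
    (dfaL c).evalFrom St3.s1 w = St3.s1 ↔ w = [] := by
  cases w with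
  | nil => simp [DFA.evalFrom]
  | cons x t =>
    show (dfaL c).evalFrom ((dfaL c).step St3.s1 x) t = St3.s1 ↔ _
    have : (dfaL c).step St3.s1 x = St3.s2 := rfl
    rw [this, dfaL_s2]
    simp

lemma dfaL_s0_loop (c : α) :
    ∀ w : List α, (dfaL c).evalFrom St3.s0 w = St3.s0 → ∀ x ∈ w, x ≠ c
  | [] => by simp
  | x :: t => by
    intro hev y hy
    by_cases hx : x = c
    · exfalso
      have hstep : (dfaL c).step St3.s0 x = St3.s1 := by simp [dfaL, hx]
      have : (dfaL c).evalFrom ((dfaL c).step St3.s0 x) t = St3.s0 := hev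
      rw [hstep] at this
      cases t with
      | nil => exact St3.noConfusion this
      | cons z s =>
        have h2 : (dfaL c).evalFrom ((dfaL c).step St3.s1 z) s = St3.s0 := this
        have : (dfaL c).step St3.s1 z = St3.s2 := rfl
        rw [this, dfaL_s2] at h2
        exact St3.noConfusion h2
    · have hstep : (dfaL c).step St3.s0 x = St3.s0 := by simp [dfaL, hx]
      have hev' : (dfaL c).evalFrom St3.s0 t = St3.s0 := by
        have : (dfaL c).evalFrom ((dfaL c).step St3.s0 x) t = St3.s0 := hev
        rwa [hstep] at this
      rcases List.mem_cons.1 hy with rfl | hy'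
      · exact hx
      · exact dfaL_s0_loop c t hev' y hy'

lemma dfaL_s0_iff (c : α) :
    ∀ w : List α, (dfaL c).evalFrom St3.s0 w = St3.s1 ↔
      ∃ u : List α, (∀ x ∈ u, x ≠ c) ∧ w = u ++ [c]
  | [] => by
    simp only [DFA.evalFrom, List.foldl_nil]
    constructor
    · intro hh; exact absurd hh (by simp)
    · rintro ⟨u, -, hu⟩; exact absurd hu (by simp)
  | x :: t => by
    by_cases hx : x = c
    · subst hx
      have hstep : (dfaL x).step St3.s0 x = St3.s1 := by simp [dfaL]
      show (dfaL x).evalFrom ((dfaL x).step St3.s0 x) t = St3.s1 ↔ _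
      rw [hstep, dfaL_s1]
      constructor
      · rintro rfl; exact ⟨[], by simp⟩
      · rintro ⟨u, hu, heq⟩
        cases u with
        | nil => simpa using heq
        | cons y s =>
          have : x = y := by simpa using congrArg (List.head? ·) heq
          exact absurd this.symm (hu y (List.mem_cons_self))
    · have hstep : (dfaL c).step St3.s0 x = St3.s0 := by simp [dfaL, hx]
      show (dfaL c).evalFrom ((dfaL c).step St3.s0 x) t = St3.s1 ↔ _
      rw [hstep, dfaL_s0_iff c t]
      constructor
      · rintro ⟨u, hu, rfl⟩
        refine ⟨x :: u, ?_, by simp⟩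
        intro y hy
        rcases List.mem_cons.1 hy with rfl | hy'
        · exact hx
        · exact hu y hy'
      · rintro ⟨u, hu, heq⟩
        cases u with
        | nil =>
          exfalso
          have : x = c := by simpa using congrArg (List.head? ·) heq
          exact hx this
        | cons y s =>
          have hxy : x = y ∧ t = s ++ [c] := by simpa using heq
          refine ⟨s, fun z hz => hu z (List.mem_cons_of_mem _ hz), hxy.2⟩

lemma dfaL_weaklyAcyclic (c : α) : (dfaL c).WeaklyAcyclic := by
  intro q w hw hloop x hx
  cases q with
  | s0 =>
    have := dfaL_s0_loop c w hloop x hx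
    simp [dfaL, this]
  | s1 =>
    exact absurd ((dfaL_s1 c w).1 hloop) hw
  | s2 => rfl

lemma dfaL_accepts (a b c : α) (hac : a ≠ c) (hbc : b ≠ c)
    (hcover : ∀ x : α, x = a ∨ x = b ∨ x = c) :
    (dfaL c).accepts = {w : List α | ∃ u : List α, (∀ x ∈ u, x = a ∨ x = b) ∧ w = u ++ [c]} := by
  ext w
  rw [DFA.mem_accepts]
  show (dfaL c).evalFrom St3.s0 w ∈ ({St3.s1} : Set St3) ↔ _
  rw [Set.mem_singleton_iff, dfaL_s0_iff c w]
  constructor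
  · rintro ⟨u, hu, rfl⟩
    refine ⟨u, fun x hx => ?_, rfl⟩
    rcases hcover x with rfl | rfl | rfl
    · exact Or.inl rfl
    · exact Or.inr rfl
    · exact absurd rfl (hu x hx)
  · rintro ⟨u, hu, rfl⟩
    refine ⟨u, fun x hx => ?_, rfl⟩
    rcases hu x hx with rfl | rfl
    · exact hac
    · exact hbc

/-! ### Computing Post -/

lemma eq_map_of_zip (h : α → α) :
    ∀ u v : List α, u.length = v.length → (∀ p ∈ u.zip v, p.2 = h p.1) → v = u.map h
  | [], [], _, _ => rfl
  | [], _ :: _, hlen, _ => by simp at hlen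
  | _ :: _, [], hlen, _ => by simp at hlen
  | x :: u, y :: v, hlen, hall => by
    have hy : y = h x := hall (x, y) (by simp)
    have hrest : v = u.map h :=
      eq_map_of_zip h u v (by simpa using hlen)
        (fun p hp => hall p (List.mem_cons_of_mem _ hp))
    simp [hy, hrest]

lemma map_fix (a b : α) (h : α → α) (hha : h a = a) (hhb : h b = b) (w : List α)
    (hw : ∀ x ∈ w, x = a ∨ x = b) : w.map h = w := by
  induction w with
  | nil => rfl
  | cons x t ih =>
    have hx : h x = x := by
      rcases hw x (List.mem_cons_self) with rfl | rfl
      · exact hha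
      · exact hhb
    simp only [List.map_cons, hx]
    rw [ih (fun y hy => hw y (List.mem_cons_of_mem _ hy))]

lemma post_eq (a b c : α) (h : α → α) (hha : h a = a) (hhb : h b = b) (hhc : h c = b) :
    Post {w : List (α × α) | ∃ u : List α, w = u.zip (u.map h)}
         {w : List α | ∃ u : List α, (∀ x ∈ u, x = a ∨ x = b) ∧ w = u ++ [c]}
      = {w : List α | ∃ u : List α, (∀ x ∈ u, x = a ∨ x = b) ∧ w = u ++ [b]} := by
  ext v
  constructor
  · rintro ⟨u, hlen, hKmem, w, hw, rfl⟩
    have hall := (mem_K_iff h _).1 hKmem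
    have hv : v = (w ++ [c]).map h := eq_map_of_zip h _ v hlen hall
    refine ⟨w, hw, ?_⟩
    rw [hv, List.map_append, map_fix a b h hha hhb w hw]
    simp [hhc]
  · rintro ⟨w, hw, rfl⟩
    refine ⟨w ++ [c], by simp, ?_, ⟨w, hw, rfl⟩⟩
    refine ⟨w ++ [c], ?_⟩
    rw [List.map_append, map_fix a b h hha hhb w hw]
    simp [hhc]

/-! ### Non weak acyclicity of {a,b}*·b -/

lemma mem_flat_rep (a b : α) (n : ℕ) (x : α) (hx : x ∈ (List.replicate n [b, a]).flatten) :
    x = a ∨ x = b := by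
  rw [List.mem_flatten] at hx
  obtain ⟨l, hl, hxl⟩ := hx
  rw [List.eq_of_mem_replicate hl, List.mem_cons] at hxl
  rcases hxl with rfl | hxl
  · exact Or.inr rfl
  · simp at hxl; exact Or.inl hxl

lemma not_wa (a b : α) (hab : a ≠ b) :
    ¬ Language.IsWeaklyAcyclic
      {w : List α | ∃ u : List α, (∀ x ∈ u, x = a ∨ x = b) ∧ w = u ++ [b]} := by
  rintro ⟨σ, _, A, hwa, hacc⟩
  set g : ℕ → List α := fun n => (List.replicate n [b, a]).flatten with hg
  have key : ∀ i j : ℕ, i < j →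
      A.evalFrom A.start (g i) = A.evalFrom A.start (g j) → False := by
    intro i j hij heq
    obtain ⟨k, rfl⟩ := Nat.exists_eq_add_of_lt hij
    set q := A.evalFrom A.start (g i) with hq
    have hsplit : g (i + k + 1) = g i ++ (List.replicate (k + 1) [b, a]).flatten := by
      rw [hg]
      simp only []
      rw [← List.flatten_append, ← List.replicate_add, Nat.add_assoc]
    have hloop : A.evalFrom q ((List.replicate (k + 1) [b, a]).flatten) = q := by
      rw [hq, ← DFA.evalFrom_of_append, ← hsplit, ← heq]
    have hd : (List.replicate (k + 1) [b, a]).flatten =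
        b :: a :: (List.replicate k [b, a]).flatten := by
      rw [List.replicate_succ, List.flatten_cons]; rfl
    have hne : (List.replicate (k + 1) [b, a]).flatten ≠ [] := by rw [hd]; simp
    have hamem : a ∈ (List.replicate (k + 1) [b, a]).flatten := by rw [hd]; simp
    have hbmem : b ∈ (List.replicate (k + 1) [b, a]).flatten := by rw [hd]; simp
    have hstepa : A.step q a = q := hwa q _ hne hloop a hamem
    have hstepb : A.step q b = q := hwa q _ hne hloop b hbmem
    have hmemb : g i ++ [b] ∈ A.accepts := by
      rw [hacc]
      exact ⟨g i, mem_flat_rep a b i, rfl⟩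
    have hqacc : q ∈ A.accept := by
      have := (DFA.mem_accepts A).1 hmemb
      rwa [DFA.eval, DFA.evalFrom_append_singleton, ← hq, hstepb] at this
    have hmema : g i ++ [a] ∈ A.accepts := by
      rw [DFA.mem_accepts, DFA.eval, DFA.evalFrom_append_singleton, ← hq, hstepa]
      exact hqacc
    rw [hacc] at hmema
    obtain ⟨u, -, hu⟩ := hmema
    have : (a : α) = b := by
      have h1 : (g i ++ [a]).getLast? = some a := List.getLast?_concat
      have h2 : (g i ++ [a]).getLast? = some b := by rw [hu]; exact List.getLast?_concat
      rw [h1] at h2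
      exact Option.some_injective _ h2
    exact hab this
  obtain ⟨i, j, hne, heq⟩ :=
    Finite.exists_ne_map_eq_of_infinite (fun n => A.evalFrom A.start (g n))
  rcases hne.lt_or_gt with hlt | hlt
  · exact key i j hlt heq
  · exact key j i hlt heq.symm

end PostWAAux

/-- Over `Σ = {a, b, c}` with the letterwise map `h` sending `a ↦ a`, `b ↦ b`,
`c ↦ b`: the relation `K = {zip(u, h(u))}` and the language `L = {a,b}*·c` are
weakly acyclic, but `Post(K, L) = {a,b}*·b` is not weakly acyclic. -/
theorem post_not_weaklyAcyclic {α : Type} [Fintype α] (a b c : α)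
    (hab : a ≠ b) (hac : a ≠ c) (hbc : b ≠ c)
    (hcover : ∀ x : α, x = a ∨ x = b ∨ x = c)
    (h : α → α) (hha : h a = a) (hhb : h b = b) (hhc : h c = b) :
    Language.IsWeaklyAcyclic {w : List (α × α) | ∃ u : List α, w = u.zip (u.map h)} ∧
    Language.IsWeaklyAcyclic
      {w : List α | ∃ u : List α, (∀ x ∈ u, x = a ∨ x = b) ∧ w = u ++ [c]} ∧
    Post {w : List (α × α) | ∃ u : List α, w = u.zip (u.map h)}
         {w : List α | ∃ u : List α, (∀ x ∈ u, x = a ∨ x = b) ∧ w = u ++ [c]}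
      = {w : List α | ∃ u : List α, (∀ x ∈ u, x = a ∨ x = b) ∧ w = u ++ [b]} ∧
    ¬ Language.IsWeaklyAcyclic
        (Post {w : List (α × α) | ∃ u : List α, w = u.zip (u.map h)}
              {w : List α | ∃ u : List α, (∀ x ∈ u, x = a ∨ x = b) ∧ w = u ++ [c]}) := by
  refine ⟨⟨Bool, inferInstance, PostWAAux.dfaK h, PostWAAux.dfaK_weaklyAcyclic h,
      PostWAAux.dfaK_accepts h⟩,
    ⟨PostWAAux.St3, inferInstance, PostWAAux.dfaL c, PostWAAux.dfaL_weaklyAcyclic c,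
      PostWAAux.dfaL_accepts a b c hac hbc hcover⟩,
    PostWAAux.post_eq a b c h hha hhb hhc, ?_⟩
  rw [PostWAAux.post_eq a b c h hha hhb hhc]
  exact PostWAAux.not_wa a b hab
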